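/- Assume the TIN-convexity condition (C1). Then for every subset S ⊆ 𝒦 and every decoding order π, P_π(S) ⊆ P_id(S); i.e., the identity (descending strength) decoding order dominates all other decoding orders for every subnetwork. -/
import Mathlib


open Finset

/-- The set of users `𝒦`: a cell `k : Fin K` together with a user index in `Fin (L k)`. -/
abbrev User {K : ℕ} (L : Fin K → ℕ) := (k : Fin K) × Fin (L k)

/-- The cyclically previous index in `Fin m` (i.e. `j - 1` modulo `m`). -/
def prevIdx {m : ℕ} (j : Fin m) : Fin m :=
  ⟨(j.val + (m - 1)) % m, Nat.mod_lt _ j.pos⟩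

/-- The cyclically next index in `Fin m` (i.e. `j + 1` modulo `m`). -/
def nextIdx {m : ℕ} (j : Fin m) : Fin m :=
  ⟨(j.val + 1) % m, Nat.mod_lt _ j.pos⟩

/-- The identity decoding order. -/
def idOrder {K : ℕ} (L : Fin K → ℕ) : (k : Fin K) → Equiv.Perm (Fin (L k)) :=
  fun _ => Equiv.refl _

/-- The term `max({0} ∪ {r_k^{[π_k(l')]} + α_{kk}^{[π_k(l')]} : l' < l, (π_k(l'),k) ∈ S}
∪ {r_j^{[l_j]} + α_{jk}^{[l_j]} : (l_j,j) ∈ S, j ≠ k})` in the polyhedral TIN constraints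
(expressed as a supremum of the corresponding finite nonempty set of reals). -/
noncomputable def innerMax {K : ℕ} (L : Fin K → ℕ)
    (α : (k : Fin K) → Fin (L k) → Fin K → ℝ)
    (π : (k : Fin K) → Equiv.Perm (Fin (L k)))
    (S : Set (User L)) (r : (k : Fin K) → Fin (L k) → ℝ)
    (k : Fin K) (l : Fin (L k)) : ℝ :=
  sSup (insert (0 : ℝ)
    ({x : ℝ | ∃ l' : Fin (L k), l' < l ∧ (⟨k, π k l'⟩ : User L) ∈ S ∧
        x = r k (π k l') + α k (π k l') k} ∪
     {x : ℝ | ∃ (j : Fin K) (lj : Fin (L j)), j ≠ k ∧ (⟨j, lj⟩ : User L) ∈ S ∧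
        x = r j lj + α j lj k}))

/-- The polyhedral TIN region `P_π(S)`: `d` is nonnegative, vanishes outside `S`, and is
realized by some power allocation `r ≤ 0` on `S`. -/
def polyTIN {K : ℕ} (L : Fin K → ℕ)
    (α : (k : Fin K) → Fin (L k) → Fin K → ℝ)
    (π : (k : Fin K) → Equiv.Perm (Fin (L k)))
    (S : Set (User L))
    (d : (k : Fin K) → Fin (L k) → ℝ) : Prop :=
  (∀ (k : Fin K) (l : Fin (L k)), 0 ≤ d k l) ∧
  (∀ (k : Fin K) (l : Fin (L k)), (⟨k, l⟩ : User L) ∉ S → d k l = 0) ∧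
  ∃ r : (k : Fin K) → Fin (L k) → ℝ,
    (∀ (k : Fin K) (l : Fin (L k)), (⟨k, l⟩ : User L) ∈ S → r k l ≤ 0) ∧
    (∀ (k : Fin K) (l : Fin (L k)), (⟨k, π k l⟩ : User L) ∈ S →
      d k (π k l) ≤ r k (π k l) + α k (π k l) k - innerMax L α π S r k l)

/-- The TIN-achievable region `P*_π` for decoding order `π`: as `P_π(𝒦)` but with the
positive part `max(0, ·)` of the upper bound. -/
def starTIN {K : ℕ} (L : Fin K → ℕ)
    (α : (k : Fin K) → Fin (L k) → Fin K → ℝ)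
    (π : (k : Fin K) → Equiv.Perm (Fin (L k)))
    (d : (k : Fin K) → Fin (L k) → ℝ) : Prop :=
  (∀ (k : Fin K) (l : Fin (L k)), 0 ≤ d k l) ∧
  ∃ r : (k : Fin K) → Fin (L k) → ℝ,
    (∀ (k : Fin K) (l : Fin (L k)), r k l ≤ 0) ∧
    (∀ (k : Fin K) (l : Fin (L k)),
      d k (π k l) ≤ max 0 (r k (π k l) + α k (π k l) k - innerMax L α π Set.univ r k l))

/-- The TIN cyclic system of GDoF inequalities for decoding order `π`:
(i) per-cell MAC-type bounds, and (ii) cyclic bounds over sequences of distinct cells. -/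
def cyclicSystem {K : ℕ} (L : Fin K → ℕ)
    (α : (k : Fin K) → Fin (L k) → Fin K → ℝ)
    (π : (k : Fin K) → Equiv.Perm (Fin (L k)))
    (d : (k : Fin K) → Fin (L k) → ℝ) : Prop :=
  (∀ (k : Fin K) (l : Fin (L k)),
      ∑ s ∈ Finset.Iic l, d k (π k s) ≤ α k (π k l) k) ∧
  (∀ m : ℕ, 2 ≤ m → m ≤ K → ∀ c : Fin m → Fin K, Function.Injective c →
    ∀ lsel : (j : Fin m) → Fin (L (c j)),
      ∑ j, (∑ s ∈ Finset.Iic (lsel j), d (c j) (π (c j) s)) ≤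
      ∑ j, (α (c j) (π (c j) (lsel j)) (c j) -
            α (c j) (π (c j) (lsel j)) (c (prevIdx j))))

/- ===== auxiliary lemmas ===== -/

private lemma innerMax_bddAux {K : ℕ} {L : Fin K → ℕ}
    (α : (k : Fin K) → Fin (L k) → Fin K → ℝ)
    (π : (k : Fin K) → Equiv.Perm (Fin (L k)))
    (S : Set (User L)) (r : (k : Fin K) → Fin (L k) → ℝ)
    (k : Fin K) (l : Fin (L k)) :
    BddAbove (insert (0 : ℝ)
      ({x : ℝ | ∃ l' : Fin (L k), l' < l ∧ (⟨k, π k l'⟩ : User L) ∈ S ∧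
          x = r k (π k l') + α k (π k l') k} ∪
       {x : ℝ | ∃ (j : Fin K) (lj : Fin (L j)), j ≠ k ∧ (⟨j, lj⟩ : User L) ∈ S ∧
          x = r j lj + α j lj k})) := by
  apply Set.Finite.bddAbove
  apply Set.Finite.insert
  apply Set.Finite.union
  · apply (Set.finite_range fun l' : Fin (L k) => r k (π k l') + α k (π k l') k).subset
    rintro x ⟨l', _, _, rfl⟩
    exact ⟨l', rfl⟩
  · apply (Set.finite_range fun u : User L => r u.1 u.2 + α u.1 u.2 k).subset
    rintro x ⟨j, lj, _, _, rfl⟩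
    exact ⟨⟨j, lj⟩, rfl⟩

private lemma innerMax_nonneg {K : ℕ} {L : Fin K → ℕ}
    (α : (k : Fin K) → Fin (L k) → Fin K → ℝ)
    (π : (k : Fin K) → Equiv.Perm (Fin (L k)))
    (S : Set (User L)) (r : (k : Fin K) → Fin (L k) → ℝ)
    (k : Fin K) (l : Fin (L k)) :
    0 ≤ innerMax L α π S r k l :=
  le_csSup (innerMax_bddAux α π S r k l) (Set.mem_insert _ _)

private lemma own_le_innerMax {K : ℕ} {L : Fin K → ℕ}
    (α : (k : Fin K) → Fin (L k) → Fin K → ℝ)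
    (π : (k : Fin K) → Equiv.Perm (Fin (L k)))
    (S : Set (User L)) (r : (k : Fin K) → Fin (L k) → ℝ)
    (k : Fin K) (l : Fin (L k)) (l' : Fin (L k)) (hl' : l' < l)
    (hS : (⟨k, π k l'⟩ : User L) ∈ S) :
    r k (π k l') + α k (π k l') k ≤ innerMax L α π S r k l :=
  le_csSup (innerMax_bddAux α π S r k l)
    (Set.mem_insert_iff.2 (Or.inr (Or.inl ⟨l', hl', hS, rfl⟩)))

private lemma cross_le_innerMax {K : ℕ} {L : Fin K → ℕ}
    (α : (k : Fin K) → Fin (L k) → Fin K → ℝ)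
    (π : (k : Fin K) → Equiv.Perm (Fin (L k)))
    (S : Set (User L)) (r : (k : Fin K) → Fin (L k) → ℝ)
    (k : Fin K) (l : Fin (L k)) (j : Fin K) (lj : Fin (L j)) (hj : j ≠ k)
    (hS : (⟨j, lj⟩ : User L) ∈ S) :
    r j lj + α j lj k ≤ innerMax L α π S r k l :=
  le_csSup (innerMax_bddAux α π S r k l)
    (Set.mem_insert_iff.2 (Or.inr (Or.inr ⟨j, lj, hj, hS, rfl⟩)))

private lemma innerMax_le {K : ℕ} {L : Fin K → ℕ}
    (α : (k : Fin K) → Fin (L k) → Fin K → ℝ)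
    (π : (k : Fin K) → Equiv.Perm (Fin (L k)))
    (S : Set (User L)) (r : (k : Fin K) → Fin (L k) → ℝ)
    (k : Fin K) (l : Fin (L k)) {x : ℝ}
    (h0 : 0 ≤ x)
    (hA : ∀ l' : Fin (L k), l' < l → (⟨k, π k l'⟩ : User L) ∈ S →
      r k (π k l') + α k (π k l') k ≤ x)
    (hB : ∀ (j : Fin K) (lj : Fin (L j)), j ≠ k → (⟨j, lj⟩ : User L) ∈ S →
      r j lj + α j lj k ≤ x) :
    innerMax L α π S r k l ≤ x := by
  refine csSup_le (Set.insert_nonempty _ _) ?_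
  rintro y (rfl | (⟨l', hl', hS, rfl⟩ | ⟨j, lj, hj, hS, rfl⟩))
  · exact h0
  · exact hA l' hl' hS
  · exact hB j lj hj hS

private lemma innerMax_mono {K : ℕ} {L : Fin K → ℕ}
    (α : (k : Fin K) → Fin (L k) → Fin K → ℝ)
    (π : (k : Fin K) → Equiv.Perm (Fin (L k)))
    (S : Set (User L)) (r : (k : Fin K) → Fin (L k) → ℝ)
    (k : Fin K) {l l₂ : Fin (L k)} (h : l ≤ l₂) :
    innerMax L α π S r k l ≤ innerMax L α π S r k l₂ :=
  innerMax_le α π S r k l (innerMax_nonneg α π S r k l₂)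
    (fun l' hl' hS => own_le_innerMax α π S r k l₂ l' (lt_of_lt_of_le hl' h) hS)
    (fun j lj hj hS => cross_le_innerMax α π S r k l₂ j lj hj hS)

private lemma swap_step {K : ℕ} {L : Fin K → ℕ}
    (α : (k : Fin K) → Fin (L k) → Fin K → ℝ)
    (hmono : ∀ k : Fin K, Monotone (fun l : Fin (L k) => α k l k))
    (hC1 : ∀ (i j : Fin K), j ≠ i → ∀ (l' l : Fin (L i)), l' < l →
      α i l' i + α i l j - α i l' j ≤ α i l i)
    (S : Set (User L)) (π : (k : Fin K) → Equiv.Perm (Fin (L k)))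
    (k0 : Fin K) (p q : Fin (L k0)) (hpq : (p : ℕ) + 1 = (q : ℕ))
    (hinv : π k0 q < π k0 p)
    (d : (k : Fin K) → Fin (L k) → ℝ) (hd : polyTIN L α π S d) :
    polyTIN L α (Function.update π k0 ((Equiv.swap p q).trans (π k0))) S d := by
  classical
  obtain ⟨hd0, hdS, r, hr0, hrc⟩ := hd
  set π' := Function.update π k0 ((Equiv.swap p q).trans (π k0)) with hπ'def
  have hpltq : p < q := by rw [Fin.lt_def]; omega
  have hpneq : p ≠ q := ne_of_lt hpltq
  have hπ'k0 : π' k0 = (Equiv.swap p q).trans (π k0) := by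
    rw [hπ'def]; exact Function.update_self _ _ _
  have hπ'p : π' k0 p = π k0 q := by
    rw [hπ'k0]; simp [Equiv.swap_apply_left]
  have hπ'q : π' k0 q = π k0 p := by
    rw [hπ'k0]; simp [Equiv.swap_apply_right]
  have hπ'o : ∀ l : Fin (L k0), l ≠ p → l ≠ q → π' k0 l = π k0 l := by
    intro l h1 h2
    rw [hπ'k0]; simp [Equiv.swap_apply_of_ne_of_ne h1 h2]
  have hπ'ne : ∀ k, k ≠ k0 → π' k = π k := by
    intro k hk; rw [hπ'def]; exact Function.update_of_ne hk _ _
  have hqlt : ∀ l : Fin (L k0), l ≠ p → l ≠ q → p < l → q < l := by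
    intro l h1 h2 h3
    rw [Fin.lt_def] at h3 ⊢
    have : (l : ℕ) ≠ (q : ℕ) := fun h => h2 (Fin.ext h)
    omega
  have hltp : ∀ l' : Fin (L k0), l' < q → l' = p ∨ l' < p := by
    intro l' h
    rw [Fin.lt_def] at h
    rcases eq_or_ne l' p with h1 | h1
    · exact Or.inl h1
    · right
      rw [Fin.lt_def]
      have : (l' : ℕ) ≠ (p : ℕ) := fun hh => h1 (Fin.ext hh)
      omega
  have hinj := (π k0).injective
  have hnab : ∀ l : Fin (L k0), l ≠ p → l ≠ q → π k0 l ≠ π k0 p ∧ π k0 l ≠ π k0 q :=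
    fun l h1 h2 => ⟨fun h => h1 (hinj h), fun h => h2 (hinj h)⟩
  refine ⟨hd0, hdS, ?_⟩
  by_cases hboth : (⟨k0, π k0 p⟩ : User L) ∈ S ∧ (⟨k0, π k0 q⟩ : User L) ∈ S
  · -- main case: both users of the swapped pair are in S
    obtain ⟨haS, hbS⟩ := hboth
    have hbnea : π k0 q ≠ π k0 p := ne_of_lt hinv
    obtain ⟨g, hga, hgb, hgo⟩ :
        ∃ g : Fin (L k0) → ℝ,
          g (π k0 p) = r k0 (π k0 q) + α k0 (π k0 q) k0 - α k0 (π k0 p) k0 ∧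
          g (π k0 q) = innerMax L α π S r k0 p + d k0 (π k0 q) - α k0 (π k0 q) k0 ∧
          ∀ u : Fin (L k0), u ≠ π k0 p → u ≠ π k0 q → g u = r k0 u := by
      refine ⟨fun u => if u = π k0 p then
          r k0 (π k0 q) + α k0 (π k0 q) k0 - α k0 (π k0 p) k0
        else if u = π k0 q then
          innerMax L α π S r k0 p + d k0 (π k0 q) - α k0 (π k0 q) k0
        else r k0 u, ?_, ?_, ?_⟩
      · simp
      · simp [hbnea]
      · intro u h1 h2; simp [h1, h2]
    obtain ⟨r', hr'k0, hr'ne⟩ :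
        ∃ r' : (k : Fin K) → Fin (L k) → ℝ, r' k0 = g ∧ ∀ k, k ≠ k0 → r' k = r k :=
      ⟨Function.update r k0 g, Function.update_self _ _ _,
        fun k hk => Function.update_of_ne hk _ _⟩
    have hM0 : 0 ≤ innerMax L α π S r k0 p := innerMax_nonneg α π S r k0 p
    have hra : r k0 (π k0 p) ≤ 0 := hr0 k0 (π k0 p) haS
    have hrb : r k0 (π k0 q) ≤ 0 := hr0 k0 (π k0 q) hbS
    have hαab : α k0 (π k0 q) k0 ≤ α k0 (π k0 p) k0 := hmono k0 (le_of_lt hinv)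
    have key_a : d k0 (π k0 p) ≤ r k0 (π k0 p) + α k0 (π k0 p) k0 - innerMax L α π S r k0 p :=
      hrc k0 p haS
    have key_b : d k0 (π k0 q) ≤ r k0 (π k0 q) + α k0 (π k0 q) k0 - innerMax L α π S r k0 q :=
      hrc k0 q hbS
    have hMq1 : innerMax L α π S r k0 p ≤ innerMax L α π S r k0 q :=
      innerMax_mono α π S r k0 (le_of_lt hpltq)
    have hMq2 : r k0 (π k0 p) + α k0 (π k0 p) k0 ≤ innerMax L α π S r k0 q :=
      own_le_innerMax α π S r k0 q p hpltq haS
    have hvb_rb : innerMax L α π S r k0 p + d k0 (π k0 q) - α k0 (π k0 q) k0 ≤ r k0 (π k0 q) := by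
      linarith
    have hva0 : r k0 (π k0 q) + α k0 (π k0 q) k0 - α k0 (π k0 p) k0 ≤ 0 := by linarith
    refine ⟨r', ?_, ?_⟩
    · intro k l hl
      by_cases hk : k = k0
      · subst hk
        rw [hr'k0]
        by_cases h1 : l = π k p
        · rw [h1, hga]; exact hva0
        · by_cases h2 : l = π k q
          · rw [h2, hgb]; linarith
          · rw [hgo l h1 h2]; exact hr0 k l hl
      · rw [hr'ne k hk]; exact hr0 k l hl
    · intro k l hmem
      by_cases hk : k = k0
      · subst hk
        by_cases hlp : l = p
        · rw [hlp] at hmem ⊢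
          rw [hπ'p] at hmem ⊢
          rw [hr'k0, hgb]
          have hle : innerMax L α π' S r' k p ≤ innerMax L α π S r k p := by
            apply innerMax_le
            · exact hM0
            · intro l' hl' hS'
              have h1 : l' ≠ p := ne_of_lt hl'
              have h2 : l' ≠ q := ne_of_lt (lt_trans hl' hpltq)
              rw [hπ'o l' h1 h2] at hS' ⊢
              rw [hr'k0, hgo _ (hnab l' h1 h2).1 (hnab l' h1 h2).2]
              exact own_le_innerMax α π S r k p l' hl' hS'
            · intro j lj hj hS'
              rw [hr'ne j hj]
              exact cross_le_innerMax α π S r k p j lj hj hS'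
          linarith
        · by_cases hlq : l = q
          · rw [hlq] at hmem ⊢
            rw [hπ'q] at hmem ⊢
            rw [hr'k0, hga]
            have hdb := hd0 k (π k q)
            have hle : innerMax L α π' S r' k q ≤
                innerMax L α π S r k p + d k (π k q) := by
              apply innerMax_le
              · linarith
              · intro l' hl' hS'
                rcases hltp l' hl' with h1 | hl'p
                · rw [h1] at hl' hS' ⊢
                  rw [hπ'p] at hS' ⊢
                  rw [hr'k0, hgb]
                  linarith
                · have h1 : l' ≠ p := ne_of_lt hl'p
                  have h2 : l' ≠ q := ne_of_lt hl'
                  rw [hπ'o l' h1 h2] at hS' ⊢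
                  rw [hr'k0, hgo _ (hnab l' h1 h2).1 (hnab l' h1 h2).2]
                  have := own_le_innerMax α π S r k p l' hl'p hS'
                  linarith
              · intro j lj hj hS'
                rw [hr'ne j hj]
                have := cross_le_innerMax α π S r k p j lj hj hS'
                linarith
            linarith
          · rw [hπ'o l hlp hlq] at hmem ⊢
            obtain ⟨hna, hnb⟩ := hnab l hlp hlq
            rw [hr'k0, hgo _ hna hnb]
            have hle : innerMax L α π' S r' k l ≤ innerMax L α π S r k l := by
              apply innerMax_le
              · exact innerMax_nonneg α π S r k l
              · intro l' hl' hS'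
                by_cases h1 : l' = p
                · rw [h1] at hl' hS' ⊢
                  have hql : q < l := hqlt l hlp hlq hl'
                  rw [hπ'p] at hS' ⊢
                  rw [hr'k0, hgb]
                  have hgen := own_le_innerMax α π S r k l q hql hS'
                  linarith
                · by_cases h2 : l' = q
                  · rw [h2] at hl' hS' ⊢
                    rw [hπ'q] at hS' ⊢
                    rw [hr'k0, hga]
                    have hgen := own_le_innerMax α π S r k l q hl' hbS
                    linarith
                  · rw [hπ'o l' h1 h2] at hS' ⊢
                    rw [hr'k0, hgo _ (hnab l' h1 h2).1 (hnab l' h1 h2).2]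
                    exact own_le_innerMax α π S r k l l' hl' hS'
              · intro j lj hj hS'
                rw [hr'ne j hj]
                exact cross_le_innerMax α π S r k l j lj hj hS'
            have := hrc k l hmem
            linarith
      · rw [hπ'ne k hk] at hmem ⊢
        rw [hr'ne k hk]
        have hle : innerMax L α π' S r' k l ≤ innerMax L α π S r k l := by
          apply innerMax_le
          · exact innerMax_nonneg α π S r k l
          · intro l' hl' hS'
            rw [hπ'ne k hk] at hS' ⊢
            rw [hr'ne k hk]
            exact own_le_innerMax α π S r k l l' hl' hS'
          · intro j lj hj hS'
            by_cases hjk0 : j = k0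
            · subst hjk0
              rw [hr'k0]
              by_cases h1 : lj = π j p
              · rw [h1, hga]
                have hc := hC1 j k (Ne.symm hj) (π j q) (π j p) hinv
                have hgen := cross_le_innerMax α π S r k l j (π j q) hj hbS
                linarith
              · by_cases h2 : lj = π j q
                · rw [h2, hgb]
                  have hgen := cross_le_innerMax α π S r k l j (π j q) hj hbS
                  linarith
                · rw [hgo _ h1 h2]
                  exact cross_le_innerMax α π S r k l j lj hj hS'
            · rw [hr'ne j hjk0]
              exact cross_le_innerMax α π S r k l j lj hj hS'
        have := hrc k l hmem
        linarith
  · -- easy case: not both users in S; keep the same power allocation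
    refine ⟨r, hr0, ?_⟩
    intro k l hmem
    by_cases hk : k = k0
    · subst hk
      by_cases hlp : l = p
      · rw [hlp] at hmem ⊢
        rw [hπ'p] at hmem ⊢
        have hle : innerMax L α π' S r k p ≤ innerMax L α π S r k q := by
          apply innerMax_le
          · exact innerMax_nonneg α π S r k q
          · intro l' hl' hS'
            have h1 : l' ≠ p := ne_of_lt hl'
            have h2 : l' ≠ q := ne_of_lt (lt_trans hl' hpltq)
            rw [hπ'o l' h1 h2] at hS' ⊢
            exact own_le_innerMax α π S r k q l' (lt_trans hl' hpltq) hS'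
          · intro j lj hj hS'
            exact cross_le_innerMax α π S r k q j lj hj hS'
        have := hrc k q hmem
        linarith
      · by_cases hlq : l = q
        · rw [hlq] at hmem ⊢
          rw [hπ'q] at hmem ⊢
          have hbS' : (⟨k, π k q⟩ : User L) ∉ S := fun hbS => hboth ⟨hmem, hbS⟩
          have hle : innerMax L α π' S r k q ≤ innerMax L α π S r k p := by
            apply innerMax_le
            · exact innerMax_nonneg α π S r k p
            · intro l' hl' hS'
              rcases hltp l' hl' with h1 | hl'p
              · rw [h1] at hS'
                rw [hπ'p] at hS'
                exact absurd hS' hbS'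
              · have h1 : l' ≠ p := ne_of_lt hl'p
                have h2 : l' ≠ q := ne_of_lt hl'
                rw [hπ'o l' h1 h2] at hS' ⊢
                exact own_le_innerMax α π S r k p l' hl'p hS'
            · intro j lj hj hS'
              exact cross_le_innerMax α π S r k p j lj hj hS'
          have := hrc k p hmem
          linarith
        · rw [hπ'o l hlp hlq] at hmem ⊢
          have hle : innerMax L α π' S r k l ≤ innerMax L α π S r k l := by
            apply innerMax_le
            · exact innerMax_nonneg α π S r k l
            · intro l' hl' hS'
              by_cases h1 : l' = p
              · rw [h1] at hl' hS' ⊢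
                rw [hπ'p] at hS' ⊢
                exact own_le_innerMax α π S r k l q (hqlt l hlp hlq hl') hS'
              · by_cases h2 : l' = q
                · rw [h2] at hl' hS' ⊢
                  rw [hπ'q] at hS' ⊢
                  exact own_le_innerMax α π S r k l p (lt_trans hpltq hl') hS'
                · rw [hπ'o l' h1 h2] at hS' ⊢
                  exact own_le_innerMax α π S r k l l' hl' hS'
            · intro j lj hj hS'
              exact cross_le_innerMax α π S r k l j lj hj hS'
          have := hrc k l hmem
          linarith
    · rw [hπ'ne k hk] at hmem ⊢
      have hle : innerMax L α π' S r k l ≤ innerMax L α π S r k l := by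
        apply innerMax_le
        · exact innerMax_nonneg α π S r k l
        · intro l' hl' hS'
          rw [hπ'ne k hk] at hS' ⊢
          exact own_le_innerMax α π S r k l l' hl' hS'
        · intro j lj hj hS'
          exact cross_le_innerMax α π S r k l j lj hj hS'
      have := hrc k l hmem
      linarith

private def wt {K : ℕ} {L : Fin K → ℕ} (π : (k : Fin K) → Equiv.Perm (Fin (L k))) : ℕ :=
  ∑ k, ∑ i : Fin (L k), (i : ℕ) * ((π k i : Fin (L k)) : ℕ)

private lemma wt_le {K : ℕ} {L : Fin K → ℕ} (π : (k : Fin K) → Equiv.Perm (Fin (L k))) :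
    wt π ≤ ∑ k, L k * (L k * L k) := by
  unfold wt
  apply Finset.sum_le_sum
  intro k _
  calc ∑ i : Fin (L k), (i : ℕ) * ((π k i : Fin (L k)) : ℕ)
      ≤ ∑ _i : Fin (L k), L k * L k :=
        Finset.sum_le_sum fun i _ => Nat.mul_le_mul i.isLt.le (π k i).isLt.le
    _ = L k * (L k * L k) := by
        rw [Finset.sum_const, Finset.card_univ, Fintype.card_fin, smul_eq_mul]

private lemma sum_lt_sum_swap {n : ℕ} (f g : Fin n → ℕ) (p q : Fin n) (hpq : p ≠ q)
    (h : ∀ i, i ≠ p → i ≠ q → f i = g i) (hlt : f p + f q < g p + g q) :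
    ∑ i, f i < ∑ i, g i := by
  classical
  have hq : q ∈ Finset.univ.erase p := Finset.mem_erase.2 ⟨Ne.symm hpq, Finset.mem_univ _⟩
  rw [← Finset.add_sum_erase _ f (Finset.mem_univ p), ← Finset.add_sum_erase _ f hq,
      ← Finset.add_sum_erase _ g (Finset.mem_univ p), ← Finset.add_sum_erase _ g hq]
  have he : ∑ i ∈ (Finset.univ.erase p).erase q, f i
      = ∑ i ∈ (Finset.univ.erase p).erase q, g i := by
    apply Finset.sum_congr rfl
    intro i hi
    rw [Finset.mem_erase, Finset.mem_erase] at hi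
    exact h i hi.2.1 hi.1
  linarith

private lemma wt_lt {K : ℕ} {L : Fin K → ℕ} (π : (k : Fin K) → Equiv.Perm (Fin (L k)))
    (k0 : Fin K) (p q : Fin (L k0)) (hpq : (p : ℕ) + 1 = (q : ℕ))
    (hinv : π k0 q < π k0 p) :
    wt π < wt (Function.update π k0 ((Equiv.swap p q).trans (π k0))) := by
  classical
  have hpneq : p ≠ q := fun h => by rw [h] at hpq; omega
  have hcell : ∑ i : Fin (L k0), (i : ℕ) * ((π k0 i : Fin (L k0)) : ℕ)
      < ∑ i : Fin (L k0), (i : ℕ) * ((((Equiv.swap p q).trans (π k0)) i : Fin (L k0)) : ℕ) := by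
    apply sum_lt_sum_swap _ _ p q hpneq
    · intro i h1 h2
      simp [Equiv.trans_apply, Equiv.swap_apply_of_ne_of_ne h1 h2]
    · simp only [Equiv.trans_apply, Equiv.swap_apply_left, Equiv.swap_apply_right]
      have hba : ((π k0 q : Fin (L k0)) : ℕ) < ((π k0 p : Fin (L k0)) : ℕ) :=
        Fin.lt_def.1 hinv
      have hq : (q : ℕ) = (p : ℕ) + 1 := hpq.symm
      rw [hq]
      have e1 : ((p : ℕ) + 1) * ((π k0 q : Fin (L k0)) : ℕ)
          = (p : ℕ) * ((π k0 q : Fin (L k0)) : ℕ) + ((π k0 q : Fin (L k0)) : ℕ) :=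
        Nat.succ_mul _ _
      have e2 : ((p : ℕ) + 1) * ((π k0 p : Fin (L k0)) : ℕ)
          = (p : ℕ) * ((π k0 p : Fin (L k0)) : ℕ) + ((π k0 p : Fin (L k0)) : ℕ) :=
        Nat.succ_mul _ _
      rw [e1, e2]
      linarith
  unfold wt
  apply Finset.sum_lt_sum
  · intro k _
    by_cases hk : k = k0
    · subst hk
      rw [Function.update_self]
      exact le_of_lt hcell
    · rw [Function.update_of_ne hk]
  · refine ⟨k0, Finset.mem_univ _, ?_⟩
    rw [Function.update_self]
    exact hcell

private lemma exists_adj_inv {n : ℕ} (σ : Equiv.Perm (Fin n)) (hσ : σ ≠ Equiv.refl _) :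
    ∃ t : ℕ, ∃ ht : t + 1 < n, σ ⟨t + 1, ht⟩ < σ ⟨t, Nat.lt_of_succ_lt ht⟩ := by
  by_contra hc
  push_neg at hc
  have hsm : StrictMono ⇑σ := by
    cases n with
    | zero => exact fun i => absurd i.isLt (by omega)
    | succ m =>
      rw [Fin.strictMono_iff_lt_succ]
      intro i
      have h1 : (i : ℕ) + 1 < m + 1 := by omega
      have hle := hc (i : ℕ) h1
      have e1 : Fin.castSucc i = (⟨(i : ℕ), Nat.lt_of_succ_lt h1⟩ : Fin (m + 1)) := rfl
      have e2 : i.succ = (⟨(i : ℕ) + 1, h1⟩ : Fin (m + 1)) := rfl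
      rw [e1, e2]
      refine lt_of_le_of_ne hle ?_
      intro h
      have := σ.injective h
      simp [Fin.ext_iff] at this
  have hid : ⇑σ = id := by
    have hr : Set.range ⇑σ = Set.range (id : Fin n → Fin n) := by
      rw [Set.range_id]
      exact σ.surjective.range_eq
    haveI : WellFoundedLT (Fin n) := inferInstance
    exact (StrictMono.range_inj (β := Fin n) (γ := Fin n) hsm strictMono_id).1 hr
  exact hσ (Equiv.ext fun x => congrFun hid x)

/-- **Step 1 of the convexity proof (dominance of the identity decoding order).**
Under the TIN-convexity condition (C1), for every subnetwork `S ⊆ 𝒦` and every decoding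
order `π`, the polyhedral TIN region `P_π(S)` is contained in `P_id(S)`. -/
theorem polyTIN_subset_polyTIN_id {K : ℕ} (hK : 1 ≤ K)
    (L : Fin K → ℕ) (hL : ∀ k, 1 ≤ L k)
    (α : (k : Fin K) → Fin (L k) → Fin K → ℝ)
    (hα : ∀ (k : Fin K) (l : Fin (L k)) (i : Fin K), 0 ≤ α k l i)
    (hmono : ∀ k : Fin K, Monotone (fun l : Fin (L k) => α k l k))
    (hC1 : ∀ (i j : Fin K), j ≠ i → ∀ (l' l : Fin (L i)), l' < l →
      α i l' i + α i l j - α i l' j ≤ α i l i) :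
    ∀ (S : Set (User L)) (π : (k : Fin K) → Equiv.Perm (Fin (L k))),
      {d : (k : Fin K) → Fin (L k) → ℝ | polyTIN L α π S d} ⊆
      {d : (k : Fin K) → Fin (L k) → ℝ | polyTIN L α (idOrder L) S d} := by
  intro S
  suffices h : ∀ (m : ℕ) (π : (k : Fin K) → Equiv.Perm (Fin (L k))),
      (∑ k, L k * (L k * L k)) + 1 ≤ wt π + m →
      {d : (k : Fin K) → Fin (L k) → ℝ | polyTIN L α π S d} ⊆
      {d : (k : Fin K) → Fin (L k) → ℝ | polyTIN L α (idOrder L) S d} by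
    intro π
    exact h ((∑ k, L k * (L k * L k)) + 1) π (by omega)
  intro m
  induction m with
  | zero =>
    intro π hπ
    exact absurd hπ (by have := wt_le π; omega)
  | succ m ih =>
    intro π hπ d hd
    by_cases hid : ∀ k, π k = Equiv.refl (Fin (L k))
    · have hpi : π = idOrder L := funext hid
      rw [← hpi]
      exact hd
    · push_neg at hid
      obtain ⟨k0, hk0⟩ := hid
      obtain ⟨t, ht, hinv⟩ := exists_adj_inv (π k0) hk0
      have hstep := swap_step α hmono hC1 S π k0 ⟨t, Nat.lt_of_succ_lt ht⟩ ⟨t + 1, ht⟩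
        rfl hinv d hd
      have hwt := wt_lt π k0 ⟨t, Nat.lt_of_succ_lt ht⟩ ⟨t + 1, ht⟩ rfl hinv
      exact ih (Function.update π k0
        ((Equiv.swap (⟨t, Nat.lt_of_succ_lt ht⟩ : Fin (L k0)) ⟨t + 1, ht⟩).trans (π k0)))
        (by omega) hstep
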